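/- Let α ∈ (0,1) be irrational and n ≥ 1 with k_0(n) = L where L ≥ 2 (or L ≥ 1 if α < 1/2). Let ∥·∥* be the one-sided distance with ∥nα∥* = ‖nα‖ < 1/2. Then ∥(n + q_{L+1})α∥* < ∥nα∥*. -/

import Mathlib

/-- Gauss-map iterates of `α`. -/
noncomputable def cfFrac (α : ℝ) : ℕ → ℝ
  | 0 => α
  | k + 1 => Int.fract (1 / cfFrac α k)

/-- Partial quotients of `α` (1-indexed, `cfA α 0 = 0` unused). -/
noncomputable def cfA (α : ℝ) : ℕ → ℕ
  | 0 => 0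
  | k + 1 => (⌊1 / cfFrac α k⌋).toNat

/-- Numerators of the convergents of `α`. -/
noncomputable def cfP (α : ℝ) : ℕ → ℕ
  | 0 => 0
  | 1 => 1
  | k + 2 => cfA α (k + 2) * cfP α (k + 1) + cfP α k

/-- Denominators of the convergents of `α`. -/
noncomputable def cfQ (α : ℝ) : ℕ → ℕ
  | 0 => 1
  | 1 => cfA α 1
  | k + 2 => cfA α (k + 2) * cfQ α (k + 1) + cfQ α k

/-- Distance from `x` to the nearest integer. -/
noncomputable def distNearInt (x : ℝ) : ℝ := min (Int.fract x) (1 - Int.fract x)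

/-- `b` is the sequence of digits of an Ostrowski representation of `n` w.r.t. `α`:
`n = Σ b_k q_k` with `0 ≤ b_0 ≤ a_1 - 1`, `0 ≤ b_k ≤ a_{k+1}` for `k ≥ 1`, and
`b_{k-1} = 0` whenever `b_k = a_{k+1}`. -/
def OstrowskiRep (α : ℝ) (n : ℕ) (b : ℕ → ℕ) : Prop :=
  b 0 ≤ cfA α 1 - 1 ∧
  (∀ k, 1 ≤ k → b k ≤ cfA α (k + 1)) ∧
  (∀ k, 1 ≤ k → b k = cfA α (k + 1) → b (k - 1) = 0) ∧
  ∃ N, (∀ k, N < k → b k = 0) ∧ n = ∑ k ∈ Finset.range (N + 1), b k * cfQ α k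

variable {α : ℝ}

lemma cf_basic (hα : α ∈ Set.Ioo (0:ℝ) 1) (hirr : Irrational α) (k : ℕ) :
    (cfFrac α k ∈ Set.Ioo (0:ℝ) 1) ∧ Irrational (cfFrac α k) := by
  induction k with
  | zero => exact ⟨hα, hirr⟩
  | succ k ih =>
    obtain ⟨⟨h0, h1⟩, hi⟩ := ih
    have hinv : Irrational (1 / cfFrac α k) := by rw [one_div]; exact hi.inv
    have hfr : Irrational (cfFrac α (k+1)) := by
      show Irrational (Int.fract (1 / cfFrac α k))
      unfold Int.fract; exact hinv.sub_intCast _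
    refine ⟨⟨?_, ?_⟩, hfr⟩
    · exact lt_of_le_of_ne (Int.fract_nonneg _) (Ne.symm hfr.ne_zero)
    · exact Int.fract_lt_one _

lemma cfA_cast (hα : α ∈ Set.Ioo (0:ℝ) 1) (hirr : Irrational α) (k : ℕ) :
    ((cfA α (k+1) : ℝ)) = (⌊1 / cfFrac α k⌋ : ℤ) := by
  obtain ⟨⟨h0, h1⟩, _⟩ := cf_basic hα hirr k
  have h : (1:ℝ) ≤ 1 / cfFrac α k := by
    rw [le_div_iff₀ h0]; simpa using h1.le
  have h2 : (0:ℤ) ≤ ⌊1 / cfFrac α k⌋ := by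
    have : (1:ℤ) ≤ ⌊1 / cfFrac α k⌋ := Int.le_floor.mpr (by exact_mod_cast h)
    omega
  show ((⌊1 / cfFrac α k⌋.toNat : ℤ) : ℝ) = _
  rw [Int.toNat_of_nonneg h2]

lemma cfA_pos (hα : α ∈ Set.Ioo (0:ℝ) 1) (hirr : Irrational α) (k : ℕ) :
    1 ≤ cfA α (k+1) := by
  obtain ⟨⟨h0, h1⟩, _⟩ := cf_basic hα hirr k
  have h : (1:ℝ) ≤ 1 / cfFrac α k := by
    rw [le_div_iff₀ h0]; simpa using h1.le
  show 1 ≤ (⌊1 / cfFrac α k⌋).toNat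
  have : (1:ℤ) ≤ ⌊1 / cfFrac α k⌋ := Int.le_floor.mpr (by exact_mod_cast h)
  omega

noncomputable def ee (α : ℝ) (k : ℕ) : ℝ := ∏ j ∈ Finset.range k, cfFrac α j

lemma ee_pos (hα : α ∈ Set.Ioo (0:ℝ) 1) (hirr : Irrational α) (k : ℕ) : 0 < ee α k :=
  Finset.prod_pos fun j _ => (cf_basic hα hirr j).1.1

lemma ee_succ (k : ℕ) : ee α (k+1) = ee α k * cfFrac α k := Finset.prod_range_succ _ _

lemma ee_lt (hα : α ∈ Set.Ioo (0:ℝ) 1) (hirr : Irrational α) (k : ℕ) :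
    ee α (k+1) < ee α k := by
  rw [ee_succ]
  nth_rewrite 2 [← mul_one (ee α k)]
  exact mul_lt_mul_of_pos_left (cf_basic hα hirr k).1.2 (ee_pos hα hirr k)

lemma ee_mono (hα : α ∈ Set.Ioo (0:ℝ) 1) (hirr : Irrational α) {m k : ℕ} (h : m ≤ k) :
    ee α k ≤ ee α m := by
  induction k with
  | zero => simp_all
  | succ k ih =>
    rcases Nat.lt_or_ge m (k+1) with h' | h'
    · exact (ee_lt hα hirr k).le.trans (ih (by omega))
    · have : m = k + 1 := le_antisymm h h'
      simp [this]

lemma ee_rec (hα : α ∈ Set.Ioo (0:ℝ) 1) (hirr : Irrational α) (k : ℕ) :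
    ee α (k+2) = ee α k - (cfA α (k+1) : ℝ) * ee α (k+1) := by
  obtain ⟨⟨h0, h1⟩, hi⟩ := cf_basic hα hirr k
  have hfr : cfFrac α (k+1) = 1 / cfFrac α k - ⌊1 / cfFrac α k⌋ := by
    show Int.fract _ = _; rw [Int.fract]
  have key : cfFrac α k * cfFrac α (k+1) = 1 - (cfA α (k+1) : ℝ) * cfFrac α k := by
    rw [hfr, cfA_cast hα hirr k]
    field_simp
  rw [ee_succ, ee_succ, mul_assoc, key]
  ring

lemma beta (hα : α ∈ Set.Ioo (0:ℝ) 1) (hirr : Irrational α) :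
    ∀ k, (cfQ α k : ℝ) * α - (cfP α k : ℝ) = (-1)^k * ee α (k+1)
  | 0 => by simp [cfQ, cfP, ee, Finset.prod_range_one, cfFrac]
  | 1 => by
      have h3 := ee_rec hα hirr 0
      have h1 : ee α 1 = α := by rw [ee, Finset.prod_range_one, cfFrac]
      have h0 : ee α 0 = 1 := by simp [ee]
      show (cfQ α 1 : ℝ) * α - (cfP α 1 : ℝ) = _
      simp only [cfQ, cfP]
      rw [pow_one]
      push_cast
      rw [show (0:ℕ)+2 = 2 from rfl, show (0:ℕ)+1 = 1 from rfl] at h3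
      linear_combination h3 + h0 - (cfA α 1 : ℝ) * h1
  | (k+2) => by
      have h1 := beta hα hirr k
      have h2 := beta hα hirr (k+1)
      have h3 := ee_rec hα hirr (k+1)
      show ((cfA α (k+2) * cfQ α (k+1) + cfQ α k : ℕ) : ℝ) * α
          - ((cfA α (k+2) * cfP α (k+1) + cfP α k : ℕ) : ℝ) = _
      push_cast
      linear_combination (cfA α (k+2):ℝ) * h2 + h1 - (-1:ℝ)^k * h3

lemma bounds (hα : α ∈ Set.Ioo (0:ℝ) 1) (hirr : Irrational α) (N : ℕ) (b : ℕ → ℕ)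
    (hdig : ∀ k, 1 ≤ k → b k ≤ cfA α (k+1)) :
    ∀ j m, 1 ≤ m → m + j = N + 1 →
      -(ee α (m+1) - ee α (N+2)) ≤
        (-1:ℝ)^m * ∑ k ∈ Finset.Ico m (N+1), (b k : ℝ) * (-1)^k * ee α (k+1) ∧
      (-1:ℝ)^m * ∑ k ∈ Finset.Ico m (N+1), (b k : ℝ) * (-1)^k * ee α (k+1)
        ≤ ee α m - ee α (N+2) := by
  intro j
  induction j with
  | zero =>
    intro m hm hmj
    have hmN : m = N + 1 := by omega
    subst hmN
    rw [Finset.Ico_self, Finset.sum_empty, mul_zero]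
    have := ee_lt hα hirr (N+1)
    constructor <;> linarith
  | succ j ih =>
    intro m hm hmj
    obtain ⟨hlo, hhi⟩ := ih (m+1) (by omega) (by omega)
    rw [Finset.sum_eq_sum_Ico_succ_bot (show m < N+1 by omega)]
    have hrec := ee_rec hα hirr m
    have he1 : (0:ℝ) < ee α (m+1) := ee_pos hα hirr (m+1)
    have hbm : (0:ℝ) ≤ (b m : ℝ) := Nat.cast_nonneg _
    have hbma : (b m : ℝ) ≤ (cfA α (m+1) : ℝ) := by exact_mod_cast hdig m hm
    have hmul : (b m : ℝ) * ee α (m+1) ≤ (cfA α (m+1) : ℝ) * ee α (m+1) :=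
      mul_le_mul_of_nonneg_right hbma he1.le
    have hmul0 : 0 ≤ (b m : ℝ) * ee α (m+1) := mul_nonneg hbm he1.le
    rcases neg_one_pow_eq_or ℝ m with hs | hs <;>
    · rw [mul_add]
      rw [show ((-1:ℝ))^(m+1) = (-1)^m * (-1) from pow_succ _ _] at hlo hhi
      rw [hs] at hlo hhi ⊢
      constructor <;> nlinarith [hlo, hhi]


lemma frac_add_pos (m : ℤ) (t : ℝ) (h0 : 0 < t) (h1 : t < 1) :
    Int.fract ((m:ℝ) + t) = t := by
  rw [Int.fract_intCast_add, Int.fract_eq_self.mpr ⟨h0.le, h1⟩]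

lemma frac_add_neg (m : ℤ) (t : ℝ) (h0 : 0 < t) (h1 : t < 1) :
    Int.fract ((m:ℝ) + (-1) * t) = 1 - t := by
  have h2 : Int.fract t = t := Int.fract_eq_self.mpr ⟨h0.le, h1⟩
  have h3 : ((m:ℝ) + (-1) * t) = (m:ℝ) + (-t) := by ring
  rw [h3, Int.fract_intCast_add, Int.fract_neg (by rw [h2]; exact h0.ne'), h2]

lemma frac_neg_add_pos (m : ℤ) (t : ℝ) (h0 : 0 < t) (h1 : t < 1) :
    Int.fract (-((m:ℝ) + t)) = 1 - t := by
  have h3 : -((m:ℝ) + t) = ((-m : ℤ):ℝ) + (-1) * t := by push_cast; ring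
  rw [h3, frac_add_neg _ _ h0 h1]

lemma frac_neg_add_neg (m : ℤ) (t : ℝ) (h0 : 0 < t) (h1 : t < 1) :
    Int.fract (-((m:ℝ) + (-1) * t)) = t := by
  have h3 : -((m:ℝ) + (-1) * t) = ((-m : ℤ):ℝ) + t := by push_cast; ring
  rw [h3, frac_add_pos _ _ h0 h1]

lemma key_lt (f : ℝ → ℝ)
    (hf : f = (fun ξ => Int.fract ξ) ∨ f = (fun ξ => Int.fract (-ξ)))
    (m m' : ℤ) (s t t' : ℝ) (hs : s = 1 ∨ s = -1)
    (ht0 : 0 < t) (ht : t < 1/2) (ht'0 : 0 < t') (htt : t' < t)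
    (hfx : f ((m:ℝ) + s*t) = distNearInt ((m:ℝ) + s*t)) :
    f ((m':ℝ) + s*t') < f ((m:ℝ) + s*t) := by
  have ht1 : t < 1 := by linarith
  have ht'1 : t' < 1 := by linarith
  rcases hs with hs | hs <;> subst hs <;> rcases hf with hf | hf <;> subst hf <;>
    simp only [one_mul] at *
  · rw [frac_add_pos m t ht0 ht1, frac_add_pos m' t' ht'0 ht'1] at *
    exact htt
  · rw [frac_neg_add_pos m t ht0 ht1] at hfx
    rw [distNearInt, frac_add_pos m t ht0 ht1] at hfx
    rw [min_eq_left (by linarith)] at hfx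
    linarith
  · rw [frac_add_neg m t ht0 ht1] at hfx
    rw [distNearInt, frac_add_neg m t ht0 ht1] at hfx
    rw [min_eq_right (by linarith)] at hfx
    linarith
  · rw [frac_neg_add_neg m t ht0 ht1, frac_neg_add_neg m' t' ht'0 ht'1] at *
    exact htt

theorem stmt15 (α : ℝ) (hα : α ∈ Set.Ioo (0:ℝ) 1) (hirr : Irrational α)
    (n : ℕ) (hn : 1 ≤ n) (b : ℕ → ℕ) (hb : OstrowskiRep α n b)
    (L : ℕ) (hL : b L ≠ 0) (hL0 : ∀ k, k < L → b k = 0)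
    (hLlow : 2 ≤ L ∨ (α < 1 / 2 ∧ 1 ≤ L))
    (f : ℝ → ℝ) (hf : f = (fun ξ => Int.fract ξ) ∨ f = (fun ξ => Int.fract (-ξ)))
    (hfn : f ((n : ℝ) * α) = distNearInt ((n : ℝ) * α)) :
    f (((n + cfQ α (L + 1) : ℕ) : ℝ) * α) < f ((n : ℝ) * α) := by

  unfold OstrowskiRep at hb
  obtain ⟨hb0, hdig, hmark, N0, hN0, hsum0⟩ := hb
  have hL1 : 1 ≤ L := by rcases hLlow with h | h; exacts [by omega, h.2]
  have hLN0 : L ≤ N0 := by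
    by_contra h
    exact hL (hN0 L (by omega))
  set N := max N0 (L+1) with hN
  have hLN1 : L + 1 ≤ N := le_max_right _ _
  have hNz : ∀ k, N < k → b k = 0 := fun k hk => hN0 k (by omega)
  have hsum : n = ∑ k ∈ Finset.range (N+1), b k * cfQ α k := by
    rw [hsum0]
    apply Finset.sum_subset
    · exact Finset.range_subset_range.mpr (by omega)
    · intro x hx hnx
      simp only [Finset.mem_range] at hx hnx
      rw [hN0 x (by omega), zero_mul]
  set M : ℕ := ∑ k ∈ Finset.range (N+1), b k * cfP α k with hM
  -- decomposition of n α
  have hD : (n:ℝ) * α - (M:ℝ) = ∑ k ∈ Finset.range (N+1), (b k : ℝ) * (-1)^k * ee α (k+1) := by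
    have h1 : ((n:ℕ):ℝ) * α = ∑ k ∈ Finset.range (N+1), (b k : ℝ) * ((cfQ α k:ℝ) * α) := by
      rw [hsum]
      push_cast
      rw [Finset.sum_mul]
      exact Finset.sum_congr rfl fun k _ => by ring
    have h2 : (M:ℝ) = ∑ k ∈ Finset.range (N+1), (b k : ℝ) * (cfP α k : ℝ) := by
      rw [hM]; push_cast; rfl
    rw [h1, h2, ← Finset.sum_sub_distrib]
    refine Finset.sum_congr rfl fun k _ => ?_
    rw [← mul_sub, beta hα hirr k]
    ring
  have hIco : ∑ k ∈ Finset.range (N+1), (b k : ℝ) * (-1)^k * ee α (k+1)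
      = ∑ k ∈ Finset.Ico L (N+1), (b k : ℝ) * (-1)^k * ee α (k+1) := by
    rw [Finset.range_eq_Ico]
    refine (Finset.sum_subset (Finset.Ico_subset_Ico (Nat.zero_le L) le_rfl) ?_).symm
    intro x hx hnx
    simp only [Finset.mem_Ico] at hx hnx
    rw [hL0 x (by omega)]
    simp
  -- sums
  set T0 : ℝ := ∑ k ∈ Finset.Ico L (N+1), (b k : ℝ) * (-1)^k * ee α (k+1) with hT0
  set T1 : ℝ := ∑ k ∈ Finset.Ico (L+1) (N+1), (b k : ℝ) * (-1)^k * ee α (k+1) with hT1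
  set T2 : ℝ := ∑ k ∈ Finset.Ico (L+2) (N+1), (b k : ℝ) * (-1)^k * ee α (k+1) with hT2
  have split1 : T0 = (b L:ℝ)*(-1)^L*ee α (L+1) + T1 :=
    Finset.sum_eq_sum_Ico_succ_bot (by omega) _
  have split2 : T1 = (b (L+1):ℝ)*(-1)^(L+1)*ee α (L+2) + T2 :=
    Finset.sum_eq_sum_Ico_succ_bot (by omega) _
  obtain ⟨blo0, bhi0⟩ := bounds hα hirr N b hdig (N+1-L) L hL1 (by omega)
  obtain ⟨blo2, bhi2⟩ := bounds hα hirr N b hdig (N+1-(L+2)) (L+2) (by omega) (by omega)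
  rw [← hT0] at blo0 bhi0
  rw [← hT2] at blo2 bhi2
  -- digit facts
  have hbL : (1:ℝ) ≤ (b L : ℝ) := by exact_mod_cast Nat.one_le_iff_ne_zero.mpr hL
  have hbL1 : (b (L+1) : ℝ) ≤ (cfA α (L+2) : ℝ) - 1 := by
    have h1 : b (L+1) ≤ cfA α (L+2) := hdig (L+1) (by omega)
    have h2 : b (L+1) ≠ cfA α (L+2) := fun h => hL (by simpa using hmark (L+1) (by omega) h)
    have h3 : b (L+1) + 1 ≤ cfA α (L+2) := by omega
    have h4 := (Nat.cast_le (α := ℝ)).mpr h3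
    push_cast at h4
    linarith
  have erec1 : ee α (L+3) = ee α (L+1) - (cfA α (L+2) : ℝ) * ee α (L+2) := ee_rec hα hirr (L+1)
  have hbL1e : (b (L+1):ℝ) * ee α (L+2) ≤ ((cfA α (L+2):ℝ) - 1) * ee α (L+2) :=
    mul_le_mul_of_nonneg_right hbL1 (ee_pos hα hirr (L+2)).le
  have hbLe : ee α (L+1) ≤ (b L:ℝ) * ee α (L+1) := by
    nth_rewrite 1 [← one_mul (ee α (L+1))]
    exact mul_le_mul_of_nonneg_right hbL (ee_pos hα hirr (L+1)).le
  have heN2 : (0:ℝ) < ee α (N+2) := ee_pos hα hirr _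
  -- upper bound < 1/2
  have hhalf : ee α L < 1/2 ∨ (α < 1/2) := by
    rcases hLlow with h | h
    · left
      have hm : ee α L ≤ ee α 2 := ee_mono hα hirr h
      have h2 : ee α 2 = ee α 0 - (cfA α 1 : ℝ) * ee α 1 := ee_rec hα hirr 0
      have h0 : ee α 0 = 1 := by simp [ee]
      have h1 : ee α 1 = α := by rw [ee, Finset.prod_range_one, cfFrac]
      have ha1 : (1:ℝ) ≤ (cfA α 1 : ℝ) := by exact_mod_cast cfA_pos hα hirr 0
      have hlt : ee α 2 < ee α 1 := ee_lt hα hirr 1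
      have hαpos : 0 < α := hα.1
      nlinarith
    · right; exact h.1
  have heLhalf : ee α L < 1/2 := by
    rcases hhalf with h | h
    · exact h
    · have h1 : ee α 1 = α := by rw [ee, Finset.prod_range_one, cfFrac]
      have := ee_mono hα hirr hL1
      linarith
  rw [hIco] at hD
  have hDeq : (n:ℝ) * α = (M:ℝ) + T0 := by linarith
  have hqα : (cfQ α (L+1):ℝ)*α = (cfP α (L+1):ℝ) + (-1)^(L+1) * ee α (L+2) := by
    have := beta hα hirr (L+1); linarith
  have goalcast : (((n + cfQ α (L + 1) : ℕ)):ℝ) = (n:ℝ) + (cfQ α (L+1):ℝ) := by push_cast; ring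
  rcases neg_one_pow_eq_or ℝ L with hs | hs
  · -- L even
    have hpow1 : (-1:ℝ)^(L+1) = -1 := by rw [pow_succ, hs]; ring
    have hpow2 : (-1:ℝ)^(L+2) = 1 := by rw [pow_succ, pow_succ, hs]; ring
    rw [hs, one_mul] at blo0 bhi0
    rw [hpow2, one_mul] at blo2 bhi2
    rw [hs] at split1
    rw [hpow1] at split2
    have hlow : ee α (L+2) + ee α (N+2) ≤ T0 := by linarith [split1, split2, blo2, hbL1e, hbLe, erec1]
    have heLL : ee α (L+2) > 0 := ee_pos hα hirr _
    have hx : (n:ℝ)*α = (((M:ℕ):ℤ):ℝ) + 1 * T0 := by push_cast; linarith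
    have hy : (((n + cfQ α (L+1) : ℕ)):ℝ) * α
        = (((M + cfP α (L+1) : ℕ):ℤ):ℝ) + 1 * (T0 - ee α (L+2)) := by
      push_cast
      linear_combination hDeq + hqα + ee α (L+2) * hpow1
    rw [hx] at hfn
    rw [hx, hy]
    exact key_lt f hf _ _ 1 T0 (T0 - ee α (L+2)) (Or.inl rfl)
      (by linarith) (by linarith) (by linarith) (by linarith) hfn
  · -- L odd
    have hpow1 : (-1:ℝ)^(L+1) = 1 := by rw [pow_succ, hs]; ring
    have hpow2 : (-1:ℝ)^(L+2) = -1 := by rw [pow_succ, pow_succ, hs]; ring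
    rw [hs] at blo0 bhi0
    rw [hpow2] at blo2 bhi2
    rw [hs] at split1
    rw [hpow1] at split2
    have hlow : ee α (L+2) + ee α (N+2) ≤ -T0 := by linarith [split1, split2, blo2, hbL1e, hbLe, erec1]
    have heLL : ee α (L+2) > 0 := ee_pos hα hirr _
    have hx : (n:ℝ)*α = (((M:ℕ):ℤ):ℝ) + (-1) * (-T0) := by push_cast; linarith
    have hy : (((n + cfQ α (L+1) : ℕ)):ℝ) * α
        = (((M + cfP α (L+1) : ℕ):ℤ):ℝ) + (-1) * (-T0 - ee α (L+2)) := by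
      push_cast
      linear_combination hDeq + hqα + ee α (L+2) * hpow1
    rw [hx] at hfn
    rw [hx, hy]
    exact key_lt f hf _ _ (-1) (-T0) (-T0 - ee α (L+2)) (Or.inr rfl)
      (by linarith) (by linarith) (by linarith) (by linarith) hfn
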